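/- Let $\Lambda = \mathrm{diag}(\lambda_1,\dots,\lambda_n)$ with $\lambda_i > 0$, $\Pi$ as above, and $\Pi(\sigma) = (\Lambda + \sigma\mathbf{1}\mathbf{1}^T)^{-1}$ for $\sigma > 0$. Then $\|\Pi - \Pi(\sigma)\|_F = \frac{\mathbf{1}^T\Lambda^{-2}\mathbf{1}}{(\mathbf{1}^T\Lambda^{-1}\mathbf{1})(\sigma\,\mathbf{1}^T\Lambda^{-1}\mathbf{1} + 1)}$. -/

import Mathlib

open Matrix

lemma sm_inv {n : ℕ} (hn : 0 < n) (lam : Fin n → ℝ) (hlam : ∀ i, 0 < lam i)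
    (σ : ℝ) (hσ : 0 < σ) :
    (Matrix.diagonal lam + σ • Matrix.of (fun _ _ : Fin n => (1 : ℝ)))⁻¹ =
      Matrix.diagonal (fun i => (lam i)⁻¹) -
        (σ / (σ * (∑ i, (lam i)⁻¹) + 1)) •
          Matrix.of (fun i j => (lam i)⁻¹ * (lam j)⁻¹) := by
  have hs : 0 < ∑ i, (lam i)⁻¹ :=
    Finset.sum_pos (fun i _ => inv_pos.2 (hlam i)) (by simpa using Finset.univ_nonempty_iff.2 ⟨⟨0, hn⟩⟩)
  set s := ∑ i, (lam i)⁻¹ with hs'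
  have ht : 0 < σ * s + 1 := by positivity
  apply Matrix.inv_eq_right_inv
  ext i j
  simp only [Matrix.mul_apply, Matrix.add_apply, Matrix.sub_apply, Matrix.smul_apply,
    Matrix.of_apply, Matrix.diagonal_apply, smul_eq_mul, mul_one, Matrix.one_apply]
  have expand : ∀ k, ((if i = k then lam i else 0) + σ) *
      ((if k = j then (lam k)⁻¹ else 0) - σ / (σ * s + 1) * ((lam k)⁻¹ * (lam j)⁻¹))
      = ((if i = k then lam i else 0) * (if k = j then (lam k)⁻¹ else 0))
        - (if i = k then lam i * (σ / (σ * s + 1) * ((lam k)⁻¹ * (lam j)⁻¹)) else 0)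
        + σ * (if k = j then (lam k)⁻¹ else 0)
        - σ * (σ / (σ * s + 1)) * (lam j)⁻¹ * (lam k)⁻¹ := by
    intro k
    by_cases h2 : k = j
    · subst h2; by_cases h : i = k <;> simp [h] <;> ring
    · by_cases h : i = k <;> simp [h, h2] <;> ring
  rw [Finset.sum_congr rfl (fun k _ => expand k)]
  rw [Finset.sum_sub_distrib, Finset.sum_add_distrib, Finset.sum_sub_distrib]
  rw [← Finset.mul_sum, ← Finset.mul_sum]
  simp only [Finset.sum_ite_eq, Finset.sum_ite_eq', Finset.mem_univ, if_true]
  rw [← hs']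
  have hsum1 : (∑ x : Fin n, (if i = x then lam i else 0) * if x = j then (lam x)⁻¹ else 0)
      = lam i * (if i = j then (lam i)⁻¹ else 0) := by
    rw [Finset.sum_eq_single i]
    · simp
    · intro b _ hb; simp [if_neg (Ne.symm hb)]
    · intro h; exact absurd (Finset.mem_univ i) h
  rw [hsum1]
  have hli : lam i ≠ 0 := (hlam i).ne'
  have hlj : lam j ≠ 0 := (hlam j).ne'
  by_cases h : i = j
  · subst h; simp only [if_pos rfl, if_true]
    field_simp
    ring
  · rw [if_neg h, if_neg h]
    field_simp
    ring


/-- Frobenius norm of the approximation error: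
‖Π - (Λ + σ𝟙𝟙ᵀ)⁻¹‖_F = (𝟙ᵀΛ⁻²𝟙) / ((𝟙ᵀΛ⁻¹𝟙)(σ 𝟙ᵀΛ⁻¹𝟙 + 1)). -/
theorem stmt_11 {n : ℕ} (hn : 0 < n) (lam : Fin n → ℝ) (hlam : ∀ i, 0 < lam i)
    (σ : ℝ) (hσ : 0 < σ) :
    (let Pi : Matrix (Fin n) (Fin n) ℝ :=
      Matrix.diagonal (fun i => (lam i)⁻¹) -
        (∑ k, (lam k)⁻¹)⁻¹ • Matrix.of (fun i j => (lam i)⁻¹ * (lam j)⁻¹)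
     let Pis : Matrix (Fin n) (Fin n) ℝ :=
      (Matrix.diagonal lam + σ • Matrix.of (fun _ _ : Fin n => (1 : ℝ)))⁻¹
     Real.sqrt (∑ i, ∑ j, (Pi i j - Pis i j) ^ 2) =
       (∑ i, ((lam i)⁻¹) ^ 2) / ((∑ i, (lam i)⁻¹) * (σ * (∑ i, (lam i)⁻¹) + 1))) := by
  have hs : 0 < ∑ i, (lam i)⁻¹ :=
    Finset.sum_pos (fun i _ => inv_pos.2 (hlam i))
      (by simpa using Finset.univ_nonempty_iff.2 ⟨⟨0, hn⟩⟩)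
  have hQ : 0 ≤ ∑ i, ((lam i)⁻¹) ^ 2 :=
    Finset.sum_nonneg fun i _ => sq_nonneg _
  have ht : 0 < σ * (∑ i, (lam i)⁻¹) + 1 := by positivity
  show Real.sqrt (∑ i, ∑ j,
      ((Matrix.diagonal (fun i => (lam i)⁻¹) -
        (∑ k, (lam k)⁻¹)⁻¹ • Matrix.of (fun i j => (lam i)⁻¹ * (lam j)⁻¹)) i j -
       ((Matrix.diagonal lam + σ • Matrix.of (fun _ _ : Fin n => (1 : ℝ)))⁻¹) i j) ^ 2)
      = (∑ i, ((lam i)⁻¹) ^ 2) / ((∑ i, (lam i)⁻¹) * (σ * (∑ i, (lam i)⁻¹) + 1))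
  rw [sm_inv hn lam hlam σ hσ]
  set s := ∑ i, (lam i)⁻¹ with hs'
  set c : ℝ := s⁻¹ - σ / (σ * s + 1) with hc
  have hc' : c = (s * (σ * s + 1))⁻¹ := by
    rw [hc]; field_simp; ring
  have key : ∀ i j : Fin n,
      ((Matrix.diagonal (fun i => (lam i)⁻¹) - s⁻¹ • Matrix.of (fun i j => (lam i)⁻¹ * (lam j)⁻¹)) i j -
       (Matrix.diagonal (fun i => (lam i)⁻¹) - (σ / (σ * s + 1)) • Matrix.of (fun i j => (lam i)⁻¹ * (lam j)⁻¹)) i j) ^ 2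
      = c ^ 2 * (((lam i)⁻¹) ^ 2 * ((lam j)⁻¹) ^ 2) := by
    intro i j
    simp only [Matrix.sub_apply, Matrix.smul_apply, Matrix.of_apply, smul_eq_mul, hc]
    ring
  have hsum : (∑ i, ∑ j,
      ((Matrix.diagonal (fun i => (lam i)⁻¹) - s⁻¹ • Matrix.of (fun i j => (lam i)⁻¹ * (lam j)⁻¹)) i j -
       (Matrix.diagonal (fun i => (lam i)⁻¹) - (σ / (σ * s + 1)) • Matrix.of (fun i j => (lam i)⁻¹ * (lam j)⁻¹)) i j) ^ 2)
      = (c * (∑ i, ((lam i)⁻¹) ^ 2)) ^ 2 := by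
    simp only [key, ← Finset.mul_sum, ← Finset.sum_mul]
    ring
  have hcpos : 0 < c := by rw [hc']; positivity
  rw [hsum, Real.sqrt_sq (mul_nonneg hcpos.le hQ), hc']
  field_simp
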